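/- (Case 112+113 with d_2 = d_1.) Let z_1, z_2, z_3 form a nondegenerate triangle and 0 < d_1 = d_2 < d_3. For k ∈ [1, d_3/d_2) define F(k) = ‖b_23(k) − b_13(k)‖ − (r_23(k) + r_13(k)), where b_ij(k), r_ij(k) are the Apollonius center and radius for segment z_i z_3 with ratio k d_i : d_3 (i = 1, 2). If F(1) > 0, then there exists k ∈ (1, d_3/d_2) with F(k) = 0, i.e., the two Apollonius circles are externally tangent, yielding a point x with ‖x − z_i‖ d_3 = ‖x − z_3‖ k d_i for i = 1, 2. -/

import Mathlib

open RealInnerProductSpace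

/-- Apollonius identity: if `b` is the Apollonius "center" for `u, v` with
parameters `c, d` and `x` lies on the corresponding circle, then
`d * ‖x - u‖² = c * ‖x - v‖²`. -/
lemma apollonius_sq {E : Type*} [NormedAddCommGroup E] [InnerProductSpace ℝ E]
    (u v x b : E) (c d : ℝ) (hD : d - c ≠ 0)
    (hb : (d - c) • b = d • u - c • v)
    (hx : (d - c) ^ 2 * ‖x - b‖ ^ 2 = c * d * ‖u - v‖ ^ 2) :
    d * ‖x - u‖ ^ 2 = c * ‖x - v‖ ^ 2 := by
  have hR : (d - c) * ⟪x, b⟫ = d * ⟪x, u⟫ - c * ⟪x, v⟫ := by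
    have := congrArg (fun w => ⟪x, w⟫) hb
    simpa [inner_sub_right, real_inner_smul_right] using this
  have hB : (d - c) ^ 2 * ‖b‖ ^ 2
      = d ^ 2 * ‖u‖ ^ 2 - 2 * (c * d) * ⟪u, v⟫ + c ^ 2 * ‖v‖ ^ 2 := by
    have h := congrArg (fun w => ‖w‖ ^ 2) hb
    simp only [norm_smul, Real.norm_eq_abs, mul_pow, sq_abs] at h
    rw [norm_sub_sq_real] at h
    simp only [norm_smul, Real.norm_eq_abs, mul_pow, sq_abs, real_inner_smul_left,
      real_inner_smul_right] at h
    linarith [h]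
  have e1 := norm_sub_sq_real x u
  have e2 := norm_sub_sq_real x v
  have eb := norm_sub_sq_real x b
  have eS := norm_sub_sq_real u v
  rw [eb, eS] at hx
  rw [e1, e2]
  have key : (d - c) * (d * (‖x‖ ^ 2 - 2 * ⟪x, u⟫ + ‖u‖ ^ 2)
      - c * (‖x‖ ^ 2 - 2 * ⟪x, v⟫ + ‖v‖ ^ 2)) = 0 := by
    linear_combination hx + 2 * (d - c) * hR - hB
  rcases mul_eq_zero.mp key with h | h
  · exact absurd h hD
  · linarith

theorem exists_k_F_zero
    (z₁ z₂ z₃ : EuclideanSpace ℝ (Fin 2)) (d₁ d₂ d₃ : ℝ)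
    (htri : AffineIndependent ℝ ![z₁, z₂, z₃])
    (hd₁ : 0 < d₁) (h12 : d₁ = d₂) (h23 : d₂ < d₃)
    (F : ℝ → ℝ)
    (hF : ∀ k : ℝ,
      F k = ‖((d₃ ^ 2 / (d₃ ^ 2 - k ^ 2 * d₂ ^ 2)) • z₂
                + (k ^ 2 * d₂ ^ 2 / (k ^ 2 * d₂ ^ 2 - d₃ ^ 2)) • z₃)
              - ((d₃ ^ 2 / (d₃ ^ 2 - k ^ 2 * d₁ ^ 2)) • z₁
                + (k ^ 2 * d₁ ^ 2 / (k ^ 2 * d₁ ^ 2 - d₃ ^ 2)) • z₃)‖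
            - (k * d₂ * d₃ * ‖z₂ - z₃‖ / (d₃ ^ 2 - k ^ 2 * d₂ ^ 2)
                + k * d₁ * d₃ * ‖z₁ - z₃‖ / (d₃ ^ 2 - k ^ 2 * d₁ ^ 2)))
    (hF1 : 0 < F 1) :
    ∃ k : ℝ, 1 < k ∧ k < d₃ / d₂ ∧ F k = 0 ∧
      ∃ x : EuclideanSpace ℝ (Fin 2),
        ‖x - z₁‖ * d₃ = ‖x - z₃‖ * (k * d₁) ∧
        ‖x - z₂‖ * d₃ = ‖x - z₃‖ * (k * d₂) := by
  subst h12
  have hd3 : 0 < d₃ := lt_trans hd₁ h23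
  have hinj := htri.injective
  have h13 : z₁ ≠ z₃ := by
    intro h
    exact (by decide : (0 : Fin 3) ≠ 2)
      (hinj (show ![z₁, z₂, z₃] 0 = ![z₁, z₂, z₃] 2 by simpa using h))
  have h23' : z₂ ≠ z₃ := by
    intro h
    exact (by decide : (1 : Fin 3) ≠ 2)
      (hinj (show ![z₁, z₂, z₃] 1 = ![z₁, z₂, z₃] 2 by simpa using h))
  have h12' : z₂ ≠ z₁ := by
    intro h
    exact (by decide : (1 : Fin 3) ≠ 0)
      (hinj (show ![z₁, z₂, z₃] 1 = ![z₁, z₂, z₃] 0 by simpa using h))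
  have ha : 0 < ‖z₂ - z₁‖ := by
    rw [norm_pos_iff]; exact sub_ne_zero.mpr h12'
  have hn13 : 0 < ‖z₁ - z₃‖ := by
    rw [norm_pos_iff]; exact sub_ne_zero.mpr h13
  have hn23 : 0 < ‖z₂ - z₃‖ := by
    rw [norm_pos_iff]; exact sub_ne_zero.mpr h23'
  -- strict triangle inequality
  have hstrict : ‖z₂ - z₁‖ < ‖z₂ - z₃‖ + ‖z₁ - z₃‖ := by
    have htr : dist z₂ z₁ ≤ dist z₂ z₃ + dist z₃ z₁ := dist_triangle _ _ _
    rcases lt_or_eq_of_le htr with h | h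
    · simpa [dist_eq_norm, norm_sub_rev z₃ z₁] using h
    · exfalso
      have hW : Wbtw ℝ z₂ z₃ z₁ := dist_add_dist_eq_iff.mp h.symm
      have hcol : Collinear ℝ ({z₂, z₃, z₁} : Set (EuclideanSpace ℝ (Fin 2))) :=
        hW.collinear
      have := (affineIndependent_iff_not_collinear_of_ne
        (p := ![z₁, z₂, z₃]) (i₁ := 1) (i₂ := 2) (i₃ := 0)
        (by decide) (by decide) (by decide)).mp htri
      simp only [Matrix.cons_val_one, Matrix.head_cons, Matrix.cons_val_two,
        Matrix.tail_cons, Matrix.cons_val_zero] at this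
      exact this hcol
  -- the key closed form of F
  have key : ∀ k : ℝ, 0 ≤ k → k * d₁ < d₃ →
      F k = (d₃ ^ 2 * ‖z₂ - z₁‖ - k * d₁ * d₃ * (‖z₂ - z₃‖ + ‖z₁ - z₃‖))
        / (d₃ ^ 2 - k ^ 2 * d₁ ^ 2) := by
    intro k hk0 hkd
    have hD : 0 < d₃ ^ 2 - k ^ 2 * d₁ ^ 2 := by nlinarith [mul_nonneg hk0 hd₁.le]
    rw [hF k]
    have hdiff : ((d₃ ^ 2 / (d₃ ^ 2 - k ^ 2 * d₁ ^ 2)) • z₂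
          + (k ^ 2 * d₁ ^ 2 / (k ^ 2 * d₁ ^ 2 - d₃ ^ 2)) • z₃)
        - ((d₃ ^ 2 / (d₃ ^ 2 - k ^ 2 * d₁ ^ 2)) • z₁
          + (k ^ 2 * d₁ ^ 2 / (k ^ 2 * d₁ ^ 2 - d₃ ^ 2)) • z₃)
        = (d₃ ^ 2 / (d₃ ^ 2 - k ^ 2 * d₁ ^ 2)) • (z₂ - z₁) := by
      rw [smul_sub]; abel
    rw [hdiff, norm_smul, Real.norm_eq_abs,
      abs_of_pos (div_pos (by positivity) hD)]
    field_simp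
  -- F 1 > 0 gives d₁ * s < d₃ * a
  have hnum : d₁ * (‖z₂ - z₃‖ + ‖z₁ - z₃‖) < d₃ * ‖z₂ - z₁‖ := by
    have h1 := hF1
    rw [key 1 zero_le_one (by linarith)] at h1
    have hD1 : 0 < d₃ ^ 2 - 1 ^ 2 * d₁ ^ 2 := by nlinarith
    have h2 := mul_pos h1 hD1
    rw [div_mul_cancel₀ _ (ne_of_gt hD1)] at h2
    nlinarith
  have hds : (0:ℝ) < d₁ * (‖z₂ - z₃‖ + ‖z₁ - z₃‖) := by positivity
  set k := d₃ * ‖z₂ - z₁‖ / (d₁ * (‖z₂ - z₃‖ + ‖z₁ - z₃‖)) with hkdef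
  have hk1 : 1 < k := (one_lt_div hds).mpr hnum
  have hk0 : 0 < k := lt_trans one_pos hk1
  have hk2 : k < d₃ / d₁ := by
    rw [hkdef, div_lt_div_iff₀ hds hd₁]
    nlinarith [mul_lt_mul_of_pos_left hstrict (mul_pos hd3 hd₁)]
  have hkd : k * d₁ < d₃ := (lt_div_iff₀ hd₁).mp hk2
  have hkds : k * (d₁ * (‖z₂ - z₃‖ + ‖z₁ - z₃‖)) = d₃ * ‖z₂ - z₁‖ :=
    div_mul_cancel₀ _ (ne_of_gt hds)
  clear_value k
  clear hkdef
  have hD : 0 < d₃ ^ 2 - k ^ 2 * d₁ ^ 2 := by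
    nlinarith [mul_nonneg hk0.le hd₁.le]
  have hDne : d₃ ^ 2 - k ^ 2 * d₁ ^ 2 ≠ 0 := ne_of_gt hD
  have hFk : F k = 0 := by
    rw [key k hk0.le hkd]
    have hnum0 : d₃ ^ 2 * ‖z₂ - z₁‖ - k * d₁ * d₃ * (‖z₂ - z₃‖ + ‖z₁ - z₃‖) = 0 := by
      linear_combination (-d₃) * hkds
    rw [hnum0, zero_div]
  refine ⟨k, hk1, hk2, hFk, ?_⟩
  clear key hF hF1 hFk htri hinj
  -- construct the tangency point
  set c := k ^ 2 * d₁ ^ 2 with hc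
  set r₁ := k * d₁ * d₃ * ‖z₁ - z₃‖ / (d₃ ^ 2 - c) with hr₁
  set r₂ := k * d₁ * d₃ * ‖z₂ - z₃‖ / (d₃ ^ 2 - c) with hr₂
  have hr₁p : 0 < r₁ := by rw [hr₁]; positivity
  have hr₂p : 0 < r₂ := by rw [hr₂]; positivity
  set b₁ := (d₃ ^ 2 / (d₃ ^ 2 - c)) • z₁ + (c / (c - d₃ ^ 2)) • z₃ with hb₁
  set b₂ := (d₃ ^ 2 / (d₃ ^ 2 - c)) • z₂ + (c / (c - d₃ ^ 2)) • z₃ with hb₂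
  have hcd3 : c - d₃ ^ 2 ≠ 0 := by
    intro h; exact hDne (by rw [hc] at h ⊢; linarith)
  have hbdiff : b₂ - b₁ = (d₃ ^ 2 / (d₃ ^ 2 - c)) • (z₂ - z₁) := by
    rw [hb₁, hb₂, smul_sub]; abel
  have hnd : ‖b₂ - b₁‖ = r₁ + r₂ := by
    rw [hbdiff, norm_smul, Real.norm_eq_abs,
      abs_of_pos (div_pos (by positivity) (by rw [hc]; exact hD)),
      hr₁, hr₂]
    rw [div_mul_eq_mul_div, ← add_div]
    congr 1
    linear_combination (-d₃) * hkds
  set x := b₁ + (r₁ / (r₁ + r₂)) • (b₂ - b₁) with hx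
  have hrs : 0 < r₁ + r₂ := by linarith
  have hx1 : ‖x - b₁‖ = r₁ := by
    have h : x - b₁ = (r₁ / (r₁ + r₂)) • (b₂ - b₁) := by rw [hx]; abel
    rw [h, norm_smul, Real.norm_eq_abs, abs_of_pos (div_pos hr₁p hrs), hnd]
    exact div_mul_cancel₀ _ (ne_of_gt hrs)
  have hx2 : ‖x - b₂‖ = r₂ := by
    have h : x - b₂ = (r₁ / (r₁ + r₂) - 1) • (b₂ - b₁) := by
      rw [hx, sub_smul, one_smul]; abel
    rw [h, norm_smul, Real.norm_eq_abs, hnd]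
    rw [show r₁ / (r₁ + r₂) - 1 = -(r₂ / (r₁ + r₂)) by field_simp; ring]
    rw [abs_neg, abs_of_pos (div_pos hr₂p hrs)]
    exact div_mul_cancel₀ _ (ne_of_gt hrs)
  have hDne' : d₃ ^ 2 - c ≠ 0 := by rw [hc]; exact hDne
  -- Apollonius identities
  have hA1 : d₃ ^ 2 * ‖x - z₁‖ ^ 2 = c * ‖x - z₃‖ ^ 2 := by
    apply apollonius_sq z₁ z₃ x b₁ c (d₃ ^ 2) hDne'
    · rw [hb₁, smul_add, smul_smul, smul_smul]
      rw [show (d₃ ^ 2 - c) * (d₃ ^ 2 / (d₃ ^ 2 - c)) = d₃ ^ 2 from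
        mul_div_cancel₀ _ hDne']
      rw [show (d₃ ^ 2 - c) * (c / (c - d₃ ^ 2)) = -c by
        field_simp; ring]
      rw [neg_smul]; abel
    · rw [hx1, hr₁]
      field_simp
      ring
  have hA2 : d₃ ^ 2 * ‖x - z₂‖ ^ 2 = c * ‖x - z₃‖ ^ 2 := by
    apply apollonius_sq z₂ z₃ x b₂ c (d₃ ^ 2) hDne'
    · rw [hb₂, smul_add, smul_smul, smul_smul]
      rw [show (d₃ ^ 2 - c) * (d₃ ^ 2 / (d₃ ^ 2 - c)) = d₃ ^ 2 from
        mul_div_cancel₀ _ hDne']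
      rw [show (d₃ ^ 2 - c) * (c / (c - d₃ ^ 2)) = -c by
        field_simp; ring]
      rw [neg_smul]; abel
    · rw [hx2, hr₂]
      field_simp
      ring
  clear_value x b₁ b₂
  refine ⟨x, ?_, ?_⟩
  · have h1 : (0:ℝ) ≤ ‖x - z₁‖ * d₃ := by positivity
    have h2 : (0:ℝ) ≤ ‖x - z₃‖ * (k * d₁) := by positivity
    refine (sq_eq_sq₀ h1 h2).mp ?_
    rw [hc] at hA1
    linear_combination hA1
  · have h1 : (0:ℝ) ≤ ‖x - z₂‖ * d₃ := by positivity
    have h2 : (0:ℝ) ≤ ‖x - z₃‖ * (k * d₁) := by positivity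
    refine (sq_eq_sq₀ h1 h2).mp ?_
    rw [hc] at hA2
    linear_combination hA2
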